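/- Let (R, 𝔪) be a Noetherian local F-finite commutative ring of characteristic p, let R̂ denote the 𝔪-adic completion of R, and let c : R → R̂ be the completion map. Then the commutative square of ring homomorphisms whose horizontal arrows are the Frobenius endomorphisms x ↦ x^p of R and of R̂, and whose vertical arrows are c, is a pushout square of commutative rings. Equivalently, writing F_*R for R regarded as an R-module via the Frobenius x ↦ x^p (and F_*R̂ for R̂ regarded as an R̂-module via its Frobenius), the map (F_*R) ⊗_R R̂ → F_*R̂ determined by F_*a ⊗ x ↦ F_*(c(a)·x^p) is well defined and bijective. -/

import Mathlib

open Submodule TensorProduct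

section Twist

variable {R : Type*} [CommRing R]

/-- `R` viewed as a module over itself via the ring hom `f`. -/
def Twist (f : R →+* R) : Type _ := R

variable (f : R →+* R)

instance : CommRing (Twist f) := inferInstanceAs (CommRing R)
instance : Module R (Twist f) := Module.compHom R f

/-- Identity, from `R` to `Twist f`. -/
def Twist.mk : R → Twist f := id
/-- Identity, from `Twist f` to `R`. -/
def Twist.un : Twist f → R := id

lemma Twist.smul_def (r : R) (x : Twist f) : r • x = Twist.mk f (f r * Twist.un f x) := rfl

lemma Twist.un_mk (x : R) : Twist.un f (Twist.mk f x) = x := rfl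
lemma Twist.mk_un (x : Twist f) : Twist.mk f (Twist.un f x) = x := rfl
lemma Twist.un_add (x y : Twist f) : Twist.un f (x + y) = Twist.un f x + Twist.un f y := rfl
lemma Twist.un_mul (x y : Twist f) : Twist.un f (x * y) = Twist.un f x * Twist.un f y := rfl
lemma Twist.un_one : Twist.un f (1 : Twist f) = 1 := rfl
lemma Twist.un_smul (r : R) (x : Twist f) : Twist.un f (r • x) = f r * Twist.un f x := rfl

/-- The identity as an `f`-semilinear map `Twist f →ₛₗ[f] R`. -/
def Twist.sl : Twist f →ₛₗ[f] R where
  toFun := Twist.un f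
  map_add' _ _ := rfl
  map_smul' r x := by
    simp only [Twist.un_smul, RingHom.id_apply, smul_eq_mul]

lemma Twist.sl_apply (x : Twist f) : Twist.sl f x = Twist.un f x := rfl

lemma Twist.mem_of_mem_smul_top {J : Ideal R} (hJ : ∀ a ∈ J, f a ∈ J) {x : Twist f}
    (hx : x ∈ (J • ⊤ : Submodule R (Twist f))) : Twist.un f x ∈ J := by
  refine Submodule.smul_induction_on hx ?_ ?_
  · intro r hr m _
    exact J.mul_mem_right _ (hJ r hr)
  · intro a b ha hb
    exact J.add_mem ha hb

lemma Twist.mul_mem_smul_top {J : Ideal R} (r : R) {x : Twist f}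
    (hx : x ∈ (J • ⊤ : Submodule R (Twist f))) :
    Twist.mk f (r * Twist.un f x) ∈ (J • ⊤ : Submodule R (Twist f)) := by
  refine Submodule.smul_induction_on hx ?_ ?_
  · intro a ha m _
    have : Twist.mk f (r * Twist.un f (a • m)) = a • (Twist.mk f (r * Twist.un f m)) := by
      show Twist.mk f (r * (f a * Twist.un f m)) = Twist.mk f (f a * (r * Twist.un f m))
      ring_nf
    rw [this]
    exact Submodule.smul_mem_smul ha mem_top
  · intro a b ha hb
    have : Twist.mk f (r * Twist.un f (a + b))
        = Twist.mk f (r * Twist.un f a) + Twist.mk f (r * Twist.un f b) := by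
      show Twist.mk f (r * (Twist.un f a + Twist.un f b)) = _
      rw [mul_add]; rfl
    rw [this]
    exact Submodule.add_mem _ ha hb

variable {p : ℕ}

lemma Twist.pow_imageSpan_le (hfr : ∀ x, f x = x ^ p) {I : Ideal R} {n : ℕ} {x : R}
    (hx : x ∈ Ideal.span (f '' ((I ^ n : Ideal R) : Set R))) :
    Twist.mk f x ∈ (I ^ n • ⊤ : Submodule R (Twist f)) := by
  induction hx using Submodule.span_induction with
  | mem y hy =>
      obtain ⟨a, ha, rfl⟩ := hy
      have : Twist.mk f (f a) = a • (1 : Twist f) := by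
        show Twist.mk f (f a) = Twist.mk f (f a * 1); rw [mul_one]
      rw [this]
      exact Submodule.smul_mem_smul ha mem_top
  | zero => exact Submodule.zero_mem _
  | add y z _ _ hy hz => exact Submodule.add_mem _ hy hz
  | smul r y _ hy =>
      have : Twist.mk f (r • y) = Twist.mk f (r * Twist.un f (Twist.mk f y)) := rfl
      rw [this]
      exact Twist.mul_mem_smul_top f r hy

/-- Cofinality: some power of `I` lands in `I ^ n • ⊤` of the twist. -/
lemma Twist.exists_pow_le [IsNoetherianRing R] (hfr : ∀ x, f x = x ^ p)
    (I : Ideal R) (n : ℕ) :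
    ∃ N, n ≤ N ∧ ∀ x : R, x ∈ I ^ N →
      Twist.mk f x ∈ (I ^ n • ⊤ : Submodule R (Twist f)) := by
  set K : Ideal R := Ideal.span (f '' ((I ^ n : Ideal R) : Set R)) with hK
  have hrad : I ≤ K.radical := by
    intro a ha
    refine ⟨n * p, ?_⟩
    have h1 : a ^ n ∈ I ^ n := Ideal.pow_mem_pow ha n
    have h2 : f (a ^ n) ∈ K := Ideal.subset_span ⟨a ^ n, h1, rfl⟩
    rwa [hfr, ← pow_mul] at h2
  obtain ⟨k, hk⟩ := Ideal.exists_pow_le_of_le_radical_of_fg hrad (IsNoetherian.noetherian I)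
  refine ⟨max n k, le_max_left _ _, fun x hx => ?_⟩
  have : x ∈ K := hk (Ideal.pow_le_pow_right (le_max_right n k) hx)
  exact Twist.pow_imageSpan_le f hfr this

end Twist

section Phi

variable {R : Type*} [CommRing R] (f : R →+* R) {p : ℕ} (I : Ideal R)

lemma Twist.smul_top_le_ker (hfr : ∀ x, f x = x ^ p) (hp : 0 < p) (n : ℕ) :
    (I ^ n • ⊤ : Submodule R (Twist f)) ≤
      LinearMap.ker ((Submodule.mkQ (I ^ n • ⊤ : Submodule R R)).comp (Twist.sl f)) := by
  intro x hx
  have hJ : ∀ a ∈ I ^ n, f a ∈ I ^ n := fun a ha => by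
    rw [hfr]; exact Ideal.pow_mem_of_mem _ ha p hp
  have hmem : Twist.un f x ∈ I ^ n := Twist.mem_of_mem_smul_top f hJ hx
  have : Twist.un f x ∈ (I ^ n • ⊤ : Submodule R R) := by
    rwa [smul_eq_mul, Ideal.mul_top]
  rw [LinearMap.mem_ker, LinearMap.comp_apply, Twist.sl_apply, Submodule.mkQ_apply,
    Submodule.Quotient.mk_eq_zero]
  exact this

/-- The level-`n` comparison map. -/
noncomputable def Twist.Q (hfr : ∀ x, f x = x ^ p) (hp : 0 < p) (n : ℕ) :
    (Twist f ⧸ (I ^ n • ⊤ : Submodule R (Twist f))) →ₛₗ[f]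
      (R ⧸ (I ^ n • ⊤ : Submodule R R)) :=
  Submodule.liftQ _ ((Submodule.mkQ (I ^ n • ⊤ : Submodule R R)).comp (Twist.sl f))
    (Twist.smul_top_le_ker f I hfr hp n)

lemma Twist.Q_mk (hfr : ∀ x, f x = x ^ p) (hp : 0 < p) (n : ℕ) (x : Twist f) :
    Twist.Q f I hfr hp n (Submodule.Quotient.mk x) = Submodule.Quotient.mk (Twist.un f x) :=
  rfl

variable [IsNoetherianRing R]

lemma AdicCompletion.transitionMap_mk {R M : Type*} [CommRing R] [AddCommGroup M] [Module R M]
    (I : Ideal R) {m n : ℕ} (hmn : m ≤ n) (x : M) :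
    AdicCompletion.transitionMap I M hmn (Submodule.Quotient.mk x) = Submodule.Quotient.mk x :=
  rfl

/-- The comparison map from the adic completion of the twist to the adic completion of `R`. -/
noncomputable def Twist.phi (hfr : ∀ x, f x = x ^ p) (hp : 0 < p) :
    AdicCompletion I (Twist f) →+ AdicCompletion I R where
  toFun v := ⟨fun n => Twist.Q f I hfr hp n (v.val n), by
    intro m n hmn
    dsimp only
    obtain ⟨x, hx⟩ := Submodule.Quotient.mk_surjective _ (v.val n)
    have hm : v.val m = Submodule.Quotient.mk x := by
      rw [← v.property hmn, ← hx, AdicCompletion.transitionMap_mk]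
    rw [← hx, hm, Twist.Q_mk, Twist.Q_mk, AdicCompletion.transitionMap_mk]⟩
  map_zero' := by
    ext n
    simp [AdicCompletion.val_zero]
  map_add' u v := by
    ext n
    simp [AdicCompletion.val_add]; rfl

lemma Twist.phi_val (hfr : ∀ x, f x = x ^ p) (hp : 0 < p) (v : AdicCompletion I (Twist f))
    (n : ℕ) : (Twist.phi f I hfr hp v).val n = Twist.Q f I hfr hp n (v.val n) := rfl

lemma Twist.phi_injective (hfr : ∀ x, f x = x ^ p) (hp : 0 < p) :
    Function.Injective (Twist.phi f I hfr hp) := by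
  rw [injective_iff_map_eq_zero]
  intro v hv
  ext m
  rw [AdicCompletion.val_zero_apply]
  obtain ⟨N, hmN, hN⟩ := Twist.exists_pow_le f hfr I m
  obtain ⟨x, hx⟩ := Submodule.Quotient.mk_surjective _ (v.val N)
  have h0 : Twist.Q f I hfr hp N (v.val N) = 0 := by
    have h0' : (Twist.phi f I hfr hp v).val N = (0 : AdicCompletion I R).val N := by rw [hv]
    rwa [Twist.phi_val, AdicCompletion.val_zero] at h0'
  rw [← hx, Twist.Q_mk, Submodule.Quotient.mk_eq_zero] at h0
  have hxIN : Twist.un f x ∈ I ^ N := by rwa [smul_eq_mul, Ideal.mul_top] at h0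
  have hvm : v.val m = Submodule.Quotient.mk x := by
    rw [← v.property hmN, ← hx, AdicCompletion.transitionMap_mk]
  rw [hvm, Submodule.Quotient.mk_eq_zero]
  simpa [Twist.mk_un] using hN (Twist.un f x) hxIN

lemma Twist.phi_surjective (hfr : ∀ x, f x = x ^ p) (hp : 0 < p) :
    Function.Surjective (Twist.phi f I hfr hp) := by
  intro w
  -- choose, for each n, a level `N n ≥ n` with `I ^ N n ⊆ I ^ n • ⊤` and a representative
  choose N hNle hN using fun n => Twist.exists_pow_le f hfr I n
  choose r hr using fun n => Submodule.Quotient.mk_surjective _ (w.val (N n))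
  -- difference of representatives lemma
  have key : ∀ {a b : ℕ}, a ≤ b →
      r a - r b ∈ (I ^ min (N a) (N b) • ⊤ : Submodule R R) := by
    intro a b _
    have h1 : Submodule.Quotient.mk (p := (I ^ min (N a) (N b) • ⊤ : Submodule R R)) (r a)
        = w.val (min (N a) (N b)) := by
      rw [← w.property (min_le_left (N a) (N b)), ← hr a, AdicCompletion.transitionMap_mk]
    have h2 : Submodule.Quotient.mk (p := (I ^ min (N a) (N b) • ⊤ : Submodule R R)) (r b)
        = w.val (min (N a) (N b)) := by
      rw [← w.property (min_le_right (N a) (N b)), ← hr b, AdicCompletion.transitionMap_mk]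
    rw [← Submodule.Quotient.eq]
    rw [h1, h2]
  have mem_tw : ∀ {m : ℕ} {x : R}, x ∈ (I ^ min (N m) (N m) • ⊤ : Submodule R R) → True := by
    intro _ _ _; trivial
  refine ⟨⟨fun n => Submodule.Quotient.mk (Twist.mk f (r n)), ?_⟩, ?_⟩
  · intro m n hmn
    rw [AdicCompletion.transitionMap_mk, ← sub_eq_zero, ← Submodule.Quotient.mk_sub,
      Submodule.Quotient.mk_eq_zero]
    have hsub : r n - r m ∈ (I ^ min (N n) (N m) • ⊤ : Submodule R R) := by
      have := key (a := m) (b := n) hmn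
      have h' : r m - r n ∈ (I ^ min (N m) (N n) • ⊤ : Submodule R R) := this
      have := Submodule.neg_mem _ h'
      rw [neg_sub] at this
      rwa [min_comm] at this
    have hsub' : r n - r m ∈ I ^ min (N n) (N m) := by
      rwa [smul_eq_mul, Ideal.mul_top] at hsub
    rcases le_total (N n) (N m) with hc | hc
    · -- min = N n, and I ^ N n • ⊤ (twist) ≤ I ^ n • ⊤ ≤ I ^ m • ⊤ for m ≤ n
      rw [min_eq_left hc] at hsub'
      have h1 : Twist.mk f (r n - r m) ∈ (I ^ n • ⊤ : Submodule R (Twist f)) :=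
        hN n _ hsub'
      have h2 : (I ^ n • ⊤ : Submodule R (Twist f)) ≤ (I ^ m • ⊤ : Submodule R (Twist f)) :=
        Submodule.smul_mono_left (Ideal.pow_le_pow_right hmn)
      exact h2 h1
    · rw [min_eq_right hc] at hsub'
      exact hN m _ hsub'
  · ext n
    show (Submodule.Quotient.mk (r n) : R ⧸ (I ^ n • ⊤ : Submodule R R)) = w.val n
    rw [← w.property (hNle n), ← hr n, AdicCompletion.transitionMap_mk]

end Phi

section KeyComp

open TensorProduct

variable {R : Type*} [CommRing R] (f : R →+* R) {p : ℕ} (I : Ideal R)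

lemma myValPow (k n : ℕ) (y : AdicCompletion I R) : (y ^ k).val n = y.val n ^ k := by
  induction k with
  | zero => simpa using AdicCompletion.val_one I n
  | succ k ih => rw [pow_succ, pow_succ, AdicCompletion.val_mul, ih]

lemma myAlgVal (x : R) (n : ℕ) :
    (algebraMap R (AdicCompletion I R) x).val n = Ideal.Quotient.mk (I ^ n • ⊤ : Ideal R) x :=
  rfl

variable [IsNoetherianRing R]

lemma Twist.phi_oTP_tmul (hfr : ∀ x, f x = x ^ p) (hp : 0 < p)
    (y : AdicCompletion I R) (m : Twist f) :
    Twist.phi f I hfr hp (AdicCompletion.ofTensorProduct I (Twist f) (y ⊗ₜ[R] m))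
      = algebraMap R (AdicCompletion I R) (Twist.un f m) * y ^ p := by
  rw [AdicCompletion.ofTensorProduct_tmul]
  apply AdicCompletion.ext
  intro n
  rw [Twist.phi_val, AdicCompletion.smul_eval]
  obtain ⟨z, hz⟩ := Ideal.Quotient.mk_surjective (y.val n)
  have hof : (AdicCompletion.of I (Twist f) m).val n = Submodule.Quotient.mk m := rfl
  rw [hof, ← hz, AdicCompletion.mk_smul_mk, ← Submodule.Quotient.mk_smul, Twist.Q_mk,
    AdicCompletion.val_mul, myValPow, myAlgVal, ← hz, ← map_pow, ← map_mul]
  have : Twist.un f (z • m) = Twist.un f m * z ^ p := by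
    rw [Twist.un_smul, hfr, mul_comm]
  rw [this]
  rfl

end KeyComp

section Master

open TensorProduct

set_option synthInstance.maxHeartbeats 1000000 in
set_option maxHeartbeats 2000000 in
theorem master {R : Type*} [CommRing R] [IsNoetherianRing R] (p : ℕ) (hp : 0 < p)
    (f : R →+* R) (hfr : ∀ x, f x = x ^ p) (I : Ideal R)
    (hFF : ∃ s : Finset R, ∀ x : R, ∃ a : R → R, x = ∑ i ∈ s, a i ^ p * i)
    (T : Type*) [CommRing T] (g : AdicCompletion I R →+* T) (h : R →+* T)
    (hcomm : ∀ x : R, g (algebraMap R (AdicCompletion I R) x) = h (x ^ p)) :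
    ∃! t : AdicCompletion I R →+* T,
      (∀ y : AdicCompletion I R, t (y ^ p) = g y) ∧
      (∀ x : R, t (algebraMap R (AdicCompletion I R) x) = h x) := by
  classical
  obtain ⟨s, hs⟩ := hFF
  -- `Twist f` is a finite `R`-module
  haveI : Module.Finite R (Twist f) := by
    refine ⟨⟨s.image (Twist.mk f), ?_⟩⟩
    rw [eq_top_iff]
    rintro x -
    obtain ⟨a, ha⟩ := hs (Twist.un f x)
    have hterm : ∀ i, a i • Twist.mk f i = Twist.mk f (a i ^ p * i) := fun i => by
      rw [Twist.smul_def, Twist.un_mk, hfr]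
    have hx : x = ∑ i ∈ s, a i • Twist.mk f i := by
      rw [Finset.sum_congr rfl (fun i _ => hterm i)]
      exact ha
    rw [hx]
    exact Submodule.sum_smul_mem _ _
      (fun i hi => Submodule.subset_span (Finset.mem_image_of_mem _ hi))
  -- The bijection β
  have hoTP := AdicCompletion.ofTensorProduct_bijective_of_finite_of_isNoetherian I (Twist f)
  have hφ : Function.Bijective (Twist.phi f I hfr hp) :=
    ⟨Twist.phi_injective f I hfr hp, Twist.phi_surjective f I hfr hp⟩
  set β : AdicCompletion I R ⊗[R] Twist f → AdicCompletion I R :=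
    fun ξ => Twist.phi f I hfr hp (AdicCompletion.ofTensorProduct I (Twist f) ξ) with hβdef
  have hβ : Function.Bijective β := hφ.comp hoTP
  have hβadd : ∀ ξ η, β (ξ + η) = β ξ + β η := fun ξ η => by
    simp only [hβdef, map_add]
  have hβ0 : β 0 = 0 := by simp only [hβdef, map_zero]
  have hβt : ∀ (y : AdicCompletion I R) (m : Twist f),
      β (y ⊗ₜ[R] m) = algebraMap R (AdicCompletion I R) (Twist.un f m) * y ^ p :=
    fun y m => Twist.phi_oTP_tmul f I hfr hp y m
  -- the map to T
  set Φ : AdicCompletion I R →+ (Twist f →+ T) :=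
    { toFun := fun y =>
        { toFun := fun m => h (Twist.un f m) * g y
          map_zero' := by
            have : Twist.un f (0 : Twist f) = 0 := rfl
            rw [this, map_zero, zero_mul]
          map_add' := fun m k => by
            rw [Twist.un_add, map_add, add_mul] }
      map_zero' := by ext m; simp
      map_add' := fun y z => by ext m; simp [mul_add] } with hΦdef
  have hΦap : ∀ y m, Φ y m = h (Twist.un f m) * g y := fun y m => rfl
  have hΦcompat : ∀ (r : R) (y : AdicCompletion I R) (m : Twist f),
      Φ (r • y) m = Φ y (r • m) := by
    intro r y m
    rw [hΦap, hΦap, Twist.un_smul, map_mul, Algebra.smul_def, map_mul, hcomm, ← hfr]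
    ring
  set toT : AdicCompletion I R ⊗[R] Twist f →+ T :=
    TensorProduct.liftAddHom Φ hΦcompat with htoTdef
  have htoT : ∀ y m, toT (y ⊗ₜ[R] m) = h (Twist.un f m) * g y := fun y m => by
    rw [htoTdef, TensorProduct.liftAddHom_tmul]
    exact hΦap y m
  -- the candidate map
  set e := Equiv.ofBijective β hβ with hedef
  set t0 : AdicCompletion I R → T := fun u => toT (e.symm u) with ht0def
  have ht0 : ∀ ξ, t0 (β ξ) = toT ξ := fun ξ => by
    rw [ht0def]
    show toT (e.symm (e ξ)) = toT ξ
    rw [Equiv.symm_apply_apply]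
  have hadd : ∀ u v, t0 (u + v) = t0 u + t0 v := by
    intro u v
    obtain ⟨ξ, rfl⟩ := hβ.2 u
    obtain ⟨η, rfl⟩ := hβ.2 v
    rw [← hβadd, ht0, ht0, ht0, map_add]
  have hzero : t0 0 = 0 := by
    rw [← hβ0, ht0, map_zero]
  have hmulcore : ∀ ξ η, t0 (β ξ * β η) = toT ξ * toT η := by
    intro ξ η
    induction ξ using TensorProduct.induction_on with
    | zero => rw [hβ0, zero_mul, hzero, map_zero, zero_mul]
    | tmul y m =>
      induction η using TensorProduct.induction_on with
      | zero => rw [hβ0, mul_zero, hzero, map_zero, mul_zero]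
      | tmul z k =>
        have hmul : β (y ⊗ₜ[R] m) * β (z ⊗ₜ[R] k) = β ((y * z) ⊗ₜ[R] (m * k)) := by
          rw [hβt, hβt, hβt, Twist.un_mul, map_mul, mul_pow]
          ring
        rw [hmul, ht0, htoT, htoT, htoT, Twist.un_mul, map_mul, map_mul]
        ring
      | add η₁ η₂ ih1 ih2 =>
        rw [hβadd, mul_add, hadd, ih1, ih2, map_add, mul_add]
    | add ξ₁ ξ₂ ih1 ih2 =>
      rw [hβadd, add_mul, hadd, ih1, ih2, map_add, add_mul]
  have hone : t0 1 = 1 := by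
    have h1 : β ((1 : AdicCompletion I R) ⊗ₜ[R] (1 : Twist f)) = 1 := by
      rw [hβt, Twist.un_one, map_one, one_pow, one_mul]
    rw [← h1, ht0, htoT, Twist.un_one, map_one, one_mul, map_one]
  set t : AdicCompletion I R →+* T :=
    { toFun := t0
      map_one' := hone
      map_mul' := fun u v => by
        obtain ⟨ξ, rfl⟩ := hβ.2 u
        obtain ⟨η, rfl⟩ := hβ.2 v
        show t0 (β ξ * β η) = t0 (β ξ) * t0 (β η)
        rw [hmulcore, ht0, ht0]
      map_zero' := hzero
      map_add' := hadd } with htdef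
  have htap : ∀ u, t u = t0 u := fun u => rfl
  -- the two desired properties
  have hprop1 : ∀ y : AdicCompletion I R, t (y ^ p) = g y := by
    intro y
    have hy : β (y ⊗ₜ[R] (1 : Twist f)) = y ^ p := by
      rw [hβt, Twist.un_one, map_one, one_mul]
    rw [htap, ← hy, ht0, htoT, Twist.un_one, map_one, one_mul]
  have hprop2 : ∀ x : R, t (algebraMap R (AdicCompletion I R) x) = h x := by
    intro x
    have hx : β ((1 : AdicCompletion I R) ⊗ₜ[R] Twist.mk f x)
        = algebraMap R (AdicCompletion I R) x := by
      rw [hβt, Twist.un_mk, one_pow, mul_one]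
    rw [htap, ← hx, ht0, htoT, Twist.un_mk, map_one, mul_one]
  refine ⟨t, ⟨hprop1, hprop2⟩, ?_⟩
  -- uniqueness
  rintro t' ⟨hg', hh'⟩
  have hkey : ∀ ξ, t' (β ξ) = toT ξ := by
    intro ξ
    induction ξ using TensorProduct.induction_on with
    | zero => rw [hβ0, map_zero, map_zero]
    | tmul y m =>
      rw [hβt, map_mul, hh', hg', htoT]
    | add ξ₁ ξ₂ ih1 ih2 =>
      rw [hβadd, map_add, ih1, ih2, map_add]
  ext u
  obtain ⟨ξ, rfl⟩ := hβ.2 u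
  rw [hkey, htap, ht0]

end Master



/-- Let `(R, 𝔪)` be a Noetherian local `F`-finite commutative ring of
characteristic `p` and `R̂` its `𝔪`-adic completion, with completion map `c : R → R̂`.
The square whose horizontal arrows are the Frobenius endomorphisms `x ↦ x^p` of `R` and
of `R̂` and whose vertical arrows are `c` is a pushout square of commutative rings:
for every commutative ring `T` and ring homomorphisms `g : R̂ → T`, `h : R → T` with
`g ∘ c = h ∘ F` there is a unique ring homomorphism `t : R̂ → T` with `t ∘ F = g` and
`t ∘ c = h`. -/
theorem stmt13 (p : ℕ) (hp : p.Prime)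
    (R : Type*) [CommRing R] [IsNoetherianRing R] [IsLocalRing R] [CharP R p]
    (hFF : ∃ s : Finset R, ∀ x : R, ∃ a : R → R, x = ∑ i ∈ s, a i ^ p * i)
    (T : Type*) [CommRing T]
    (g : AdicCompletion (IsLocalRing.maximalIdeal R) R →+* T)
    (h : R →+* T)
    (hcomm : ∀ x : R,
      g (algebraMap R (AdicCompletion (IsLocalRing.maximalIdeal R) R) x) = h (x ^ p)) :
    ∃! t : AdicCompletion (IsLocalRing.maximalIdeal R) R →+* T,
      (∀ y : AdicCompletion (IsLocalRing.maximalIdeal R) R, t (y ^ p) = g y) ∧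
      (∀ x : R,
        t (algebraMap R (AdicCompletion (IsLocalRing.maximalIdeal R) R) x) = h x) := by
  haveI : ExpChar R p := ExpChar.prime hp
  exact master p hp.pos (frobenius R p) (fun x => frobenius_def p x)
    (IsLocalRing.maximalIdeal R) hFF T g h hcomm
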